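/- (Theorem B.1) For all real a, ε, μ, μ', τ₀, b, φ₀, every real time τ, and all integers j and k, shifting the angle parameters b and φ₀ of the full time-dependent Hamiltonian h = h₀ + h₁ by 2πj/N and 2πk/N respectively is equivalent to conjugation by clock and shift operators: h(b + 2πj/N, φ₀ + 2πk/N, τ) = Z^{j} X^{k} · h(b, φ₀, τ) · X^{−k} Z^{−j}. -/

import Mathlib

open Matrix Complex

noncomputable section

/-- `ω = exp(2πi/N)`. -/
def omegaN (N : ℕ) : ℂ := Complex.exp (2 * Real.pi * Complex.I / N)

/-- The shift matrix `X` with entries `X j k = 1` iff `j ≡ k+1 (mod N)`. -/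
def shiftX (N : ℕ) : Matrix (Fin N) (Fin N) ℂ :=
  Matrix.of fun j k => if (j : ℕ) = ((k : ℕ) + 1) % N then 1 else 0

/-- The clock matrix `Z = diag(ω^j)`. -/
def clockZ (N : ℕ) : Matrix (Fin N) (Fin N) ℂ :=
  Matrix.diagonal fun j => omegaN N ^ (j : ℕ)


section HarperAux
variable {N : ℕ}
lemma omegaN_ne_zero (N : ℕ) : omegaN N ≠ 0 := Complex.exp_ne_zero _
lemma omegaN_pow_N (N : ℕ) (hN : 0 < N) : omegaN N ^ N = 1 := by
  rw [omegaN, ← Complex.exp_nat_mul, mul_div_assoc', mul_div_cancel_left₀]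
  · exact Complex.exp_two_pi_mul_I
  · exact Nat.cast_ne_zero.mpr hN.ne'
lemma star_omegaN (N : ℕ) : star (omegaN N) = (omegaN N)⁻¹ := by
  show (starRingEnd ℂ) _ = _
  rw [omegaN, ← Complex.exp_conj, ← Complex.exp_neg]
  congr 1
  simp [map_div₀, _root_.map_mul, Complex.conj_I, map_ofNat, Complex.conj_ofReal]
  ring
lemma star_omegaN_mul (N : ℕ) : star (omegaN N) * omegaN N = 1 := by
  rw [star_omegaN, inv_mul_cancel₀ (omegaN_ne_zero N)]
lemma shiftX_apply [NeZero N] (p q : Fin N) :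
    shiftX N p q = if p = q + 1 then 1 else 0 := by
  rw [shiftX, Matrix.of_apply]
  congr 1
  simp [Fin.ext_iff, Fin.val_add, Fin.val_one', Nat.add_mod]

lemma omegaN_pow_mod (hN : 0 < N) (m : ℕ) : omegaN N ^ (m % N) = omegaN N ^ m := by
  conv_rhs => rw [← Nat.div_add_mod m N, pow_add, pow_mul, omegaN_pow_N N hN, one_pow, one_mul]

lemma omegaN_pow_val_add_one (hN : 0 < N) (q : Fin N) :
    haveI : NeZero N := ⟨hN.ne'⟩
    omegaN N ^ ((q + 1 : Fin N) : ℕ) = omegaN N * omegaN N ^ (q : ℕ) := by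
  haveI : NeZero N := ⟨hN.ne'⟩
  rw [Fin.val_add, Fin.val_one', omegaN_pow_mod hN, pow_add, omegaN_pow_mod hN 1, pow_one,
    mul_comm]

lemma ZX (hN : 0 < N) : clockZ N * shiftX N = omegaN N • (shiftX N * clockZ N) := by
  haveI : NeZero N := ⟨hN.ne'⟩
  ext p q
  simp only [clockZ, Matrix.diagonal_mul, Matrix.mul_diagonal, Matrix.smul_apply,
    shiftX_apply, smul_eq_mul]
  split
  · rename_i h; subst h
    rw [omegaN_pow_val_add_one hN]; ring
  · ring

lemma ZXH (hN : 0 < N) : clockZ N * (shiftX N)ᴴ = (omegaN N)⁻¹ • ((shiftX N)ᴴ * clockZ N) := by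
  haveI : NeZero N := ⟨hN.ne'⟩
  ext p q
  simp only [clockZ, Matrix.diagonal_mul, Matrix.mul_diagonal, Matrix.smul_apply,
    Matrix.conjTranspose_apply, shiftX_apply, smul_eq_mul, apply_ite (star : ℂ → ℂ), star_one, star_zero]
  split
  · rename_i h; subst h
    rw [omegaN_pow_val_add_one hN, one_mul, ← mul_assoc,
      inv_mul_cancel₀ (omegaN_ne_zero N), one_mul, mul_one]
  · ring

lemma XZ (hN : 0 < N) : shiftX N * clockZ N = (omegaN N)⁻¹ • (clockZ N * shiftX N) := by
  rw [ZX hN, inv_smul_smul₀ (omegaN_ne_zero N)]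

lemma XZH (hN : 0 < N) : shiftX N * (clockZ N)ᴴ = omegaN N • ((clockZ N)ᴴ * shiftX N) := by
  haveI : NeZero N := ⟨hN.ne'⟩
  ext p q
  simp only [clockZ, Matrix.diagonal_conjTranspose, Matrix.diagonal_mul, Matrix.mul_diagonal,
    Matrix.smul_apply, Pi.star_apply, shiftX_apply, smul_eq_mul]
  split
  · rename_i h; subst h
    rw [omegaN_pow_val_add_one hN, mul_one, one_mul, star_mul', ← mul_assoc,
      mul_comm (omegaN N) (star (omegaN N)), star_omegaN_mul, one_mul]
  · ring

lemma XHX (hN : 0 < N) : (shiftX N)ᴴ * shiftX N = 1 := by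
  haveI : NeZero N := ⟨hN.ne'⟩
  ext p q
  simp only [Matrix.mul_apply, Matrix.conjTranspose_apply, shiftX_apply, apply_ite (star : ℂ → ℂ), star_one,
    star_zero, ite_mul, one_mul, zero_mul, Matrix.one_apply]
  rw [Finset.sum_ite_eq']
  simp [add_left_inj]

lemma ZZH (hN : 0 < N) : clockZ N * (clockZ N)ᴴ = 1 := by
  have hval : ∀ i : Fin N, omegaN N ^ (i : ℕ) * star (omegaN N ^ (i : ℕ)) = 1 := fun i => by
    rw [star_pow, ← mul_pow, mul_comm, star_omegaN_mul, one_pow]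
  rw [clockZ, Matrix.diagonal_conjTranspose, Matrix.diagonal_mul_diagonal]
  simp only [Pi.star_apply]
  rw [show (fun i : Fin N => omegaN N ^ (i : ℕ) * star (omegaN N ^ (i : ℕ)))
      = fun _ => (1 : ℂ) from funext hval, Matrix.diagonal_one]
lemma semiconj_pow (u : (Matrix (Fin N) (Fin N) ℂ)ˣ) (x : Matrix (Fin N) (Fin N) ℂ) (c : ℂ)
    (h : (u : Matrix (Fin N) (Fin N) ℂ) * x = c • (x * u)) :
    ∀ m : ℕ, ((u ^ m : (Matrix (Fin N) (Fin N) ℂ)ˣ) : Matrix (Fin N) (Fin N) ℂ) * x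
      = c ^ m • (x * ((u ^ m : (Matrix (Fin N) (Fin N) ℂ)ˣ) : Matrix (Fin N) (Fin N) ℂ)) := by
  intro m
  induction m with
  | zero => simp
  | succ m ih =>
      rw [pow_succ, Units.val_mul, mul_assoc, h, mul_smul_comm, ← mul_assoc, ih,
        smul_mul_assoc, smul_smul, pow_succ, mul_assoc, mul_comm c (c ^ m)]

lemma semiconj_inv (u : (Matrix (Fin N) (Fin N) ℂ)ˣ) (x : Matrix (Fin N) (Fin N) ℂ) (c : ℂ)
    (hc : c ≠ 0) (h : (u : Matrix (Fin N) (Fin N) ℂ) * x = c • (x * u)) :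
    ((u⁻¹ : (Matrix (Fin N) (Fin N) ℂ)ˣ) : Matrix (Fin N) (Fin N) ℂ) * x
      = c⁻¹ • (x * ((u⁻¹ : (Matrix (Fin N) (Fin N) ℂ)ˣ) : Matrix (Fin N) (Fin N) ℂ)) := by
  have h2 : x * (↑u⁻¹ : Matrix (Fin N) (Fin N) ℂ) = c • ((↑u⁻¹ : Matrix (Fin N) (Fin N) ℂ) * x) := by
    calc x * (↑u⁻¹ : Matrix (Fin N) (Fin N) ℂ)
        = ↑u⁻¹ * (↑u * x) * ↑u⁻¹ := by
          rw [← mul_assoc, ← Units.val_mul, inv_mul_cancel, Units.val_one, one_mul]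
      _ = ↑u⁻¹ * (c • (x * ↑u)) * ↑u⁻¹ := by rw [h]
      _ = c • (↑u⁻¹ * x * (↑u * ↑u⁻¹)) := by
          rw [mul_smul_comm, smul_mul_assoc, mul_assoc, mul_assoc, mul_assoc]
      _ = c • ((↑u⁻¹ : Matrix (Fin N) (Fin N) ℂ) * x) := by
          rw [← Units.val_mul, mul_inv_cancel, Units.val_one, mul_one]
  rw [h2, smul_smul, inv_mul_cancel₀ hc, one_smul]

lemma semiconj_zpow (u : (Matrix (Fin N) (Fin N) ℂ)ˣ) (x : Matrix (Fin N) (Fin N) ℂ) (c : ℂ)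
    (hc : c ≠ 0) (h : (u : Matrix (Fin N) (Fin N) ℂ) * x = c • (x * u)) :
    ∀ m : ℤ, ((u ^ m : (Matrix (Fin N) (Fin N) ℂ)ˣ) : Matrix (Fin N) (Fin N) ℂ) * x
      = c ^ m • (x * ((u ^ m : (Matrix (Fin N) (Fin N) ℂ)ˣ) : Matrix (Fin N) (Fin N) ℂ))
  | Int.ofNat m => by
      simpa [zpow_natCast] using semiconj_pow u x c h m
  | Int.negSucc m => by
      have := semiconj_pow u⁻¹ x c⁻¹ (semiconj_inv u x c hc h) (m + 1)
      rw [zpow_negSucc, ← inv_pow, zpow_negSucc, ← inv_pow]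
      exact this

lemma conjZpow (u : (Matrix (Fin N) (Fin N) ℂ)ˣ) (x : Matrix (Fin N) (Fin N) ℂ) (c : ℂ)
    (hc : c ≠ 0) (h : (u : Matrix (Fin N) (Fin N) ℂ) * x = c • (x * u)) (m : ℤ) :
    ((u ^ m : (Matrix (Fin N) (Fin N) ℂ)ˣ) : Matrix (Fin N) (Fin N) ℂ) * x
        * ((u ^ (-m) : (Matrix (Fin N) (Fin N) ℂ)ˣ) : Matrix (Fin N) (Fin N) ℂ)
      = c ^ m • x := by
  rw [semiconj_zpow u x c hc h m, smul_mul_assoc, mul_assoc, ← Units.val_mul, ← _root_.zpow_add,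
    add_neg_cancel, zpow_zero, Units.val_one, mul_one]
end HarperAux

/-- The unperturbed Harper Hamiltonian in clock-and-shift form:
`h₀(b,φ₀) = a·I − (a/2)(e^{ib} X + e^{−ib} X†) − (ε/2)(e^{−iφ₀} Z + e^{iφ₀} Z†)`. -/
def harperH0 (N : ℕ) (a ε b φ₀ : ℝ) : Matrix (Fin N) (Fin N) ℂ :=
  (a : ℂ) • (1 : Matrix (Fin N) (Fin N) ℂ)
    - ((a : ℂ) / 2) • (Complex.exp (Complex.I * b) • shiftX N
        + Complex.exp (-(Complex.I * b)) • (shiftX N)ᴴ)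
    - ((ε : ℂ) / 2) • (Complex.exp (-(Complex.I * φ₀)) • clockZ N
        + Complex.exp (Complex.I * φ₀) • (clockZ N)ᴴ)


/-- The time-dependent perturbation in clock-and-shift form:
`h₁(φ₀,τ) = −((μ+μ~)/2)(e^{−iφ₀} Z + e^{iφ₀} Z†)·cos(τ−τ₀)
          + ((μ~−μ)/(2i))(e^{−iφ₀} Z − e^{iφ₀} Z†)·sin(τ−τ₀)`. -/
def harperH1 (N : ℕ) (μ μ2 τ₀ φ₀ τ : ℝ) : Matrix (Fin N) (Fin N) ℂ :=
  (-((((μ : ℂ) + μ2) / 2) * (Real.cos (τ - τ₀) : ℂ))) •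
      (Complex.exp (-(Complex.I * φ₀)) • clockZ N
        + Complex.exp (Complex.I * φ₀) • (clockZ N)ᴴ)
    + (((((μ2 : ℂ) - μ) / (2 * Complex.I))) * (Real.sin (τ - τ₀) : ℂ)) •
      (Complex.exp (-(Complex.I * φ₀)) • clockZ N
        - Complex.exp (Complex.I * φ₀) • (clockZ N)ᴴ)

/-- The full time-dependent Hamiltonian of the periodically perturbed Harper model. -/
def harperH (N : ℕ) (a ε μ μ2 τ₀ b φ₀ τ : ℝ) : Matrix (Fin N) (Fin N) ℂ :=
  harperH0 N a ε b φ₀ + harperH1 N μ μ2 τ₀ φ₀ τ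

/-- (Theorem B.1) Shifting the angle parameters b and φ₀ of the full time-dependent
Hamiltonian h = h₀ + h₁ by 2πj/N and 2πk/N is equivalent to conjugation by clock and
shift operators. -/
theorem harperH_shift_conj (N : ℕ) (hN : 0 < N) (a ε μ μ2 τ₀ b φ₀ τ : ℝ) (j k : ℤ) :
    harperH N a ε μ μ2 τ₀ (b + 2 * Real.pi * j / N) (φ₀ + 2 * Real.pi * k / N) τ
      = clockZ N ^ j * shiftX N ^ k * harperH N a ε μ μ2 τ₀ b φ₀ τ
          * shiftX N ^ (-k) * clockZ N ^ (-j) := by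
  haveI : NeZero N := ⟨hN.ne'⟩
  set ω : ℂ := omegaN N with hω
  have hXXH : shiftX N * (shiftX N)ᴴ = 1 := mul_eq_one_comm.mpr (XHX hN)
  have hZHZ : (clockZ N)ᴴ * clockZ N = 1 := mul_eq_one_comm.mpr (ZZH hN)
  set uZ : (Matrix (Fin N) (Fin N) ℂ)ˣ := ⟨clockZ N, (clockZ N)ᴴ, ZZH hN, hZHZ⟩ with huZ
  set uX : (Matrix (Fin N) (Fin N) ℂ)ˣ := ⟨shiftX N, (shiftX N)ᴴ, hXXH, XHX hN⟩ with huX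
  have hZcoe : ∀ m : ℤ, clockZ N ^ m = ((uZ ^ m : (Matrix (Fin N) (Fin N) ℂ)ˣ) : Matrix (Fin N) (Fin N) ℂ) :=
    fun m => (Matrix.coe_units_zpow uZ m).symm
  have hXcoe : ∀ m : ℤ, shiftX N ^ m = ((uX ^ m : (Matrix (Fin N) (Fin N) ℂ)ˣ) : Matrix (Fin N) (Fin N) ℂ) :=
    fun m => (Matrix.coe_units_zpow uX m).symm
  rw [hZcoe j, hZcoe (-j), hXcoe k, hXcoe (-k)]
  set ZJ : Matrix (Fin N) (Fin N) ℂ := ((uZ ^ j : (Matrix (Fin N) (Fin N) ℂ)ˣ) : Matrix (Fin N) (Fin N) ℂ) with hZJ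
  set ZJn : Matrix (Fin N) (Fin N) ℂ := ((uZ ^ (-j) : (Matrix (Fin N) (Fin N) ℂ)ˣ) : Matrix (Fin N) (Fin N) ℂ) with hZJn
  set XK : Matrix (Fin N) (Fin N) ℂ := ((uX ^ k : (Matrix (Fin N) (Fin N) ℂ)ˣ) : Matrix (Fin N) (Fin N) ℂ) with hXK
  set XKn : Matrix (Fin N) (Fin N) ℂ := ((uX ^ (-k) : (Matrix (Fin N) (Fin N) ℂ)ˣ) : Matrix (Fin N) (Fin N) ℂ) with hXKn
  -- inner conjugations (by X^k)
  have cXk_X : XK * shiftX N * XKn = shiftX N := by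
    simpa only [_root_.one_zpow, one_smul, mul_one, one_mul, ← hZJ, ← hZJn, ← hXK, ← hXKn] using conjZpow uX (shiftX N) 1 one_ne_zero (by simp; rfl) k
  have cXk_XH : XK * (shiftX N)ᴴ * XKn = (shiftX N)ᴴ := by
    simpa only [_root_.one_zpow, one_smul, mul_one, one_mul, ← hZJ, ← hZJn, ← hXK, ← hXKn] using conjZpow uX ((shiftX N)ᴴ) 1 one_ne_zero
      (by simp only [one_smul]; show shiftX N * (shiftX N)ᴴ = (shiftX N)ᴴ * shiftX N;
          rw [hXXH, XHX hN]) k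
  have cXk_Z : XK * clockZ N * XKn = (ω⁻¹) ^ k • clockZ N :=
    conjZpow uX (clockZ N) ω⁻¹ (inv_ne_zero (omegaN_ne_zero N)) (XZ hN) k
  have cXk_ZH : XK * (clockZ N)ᴴ * XKn = ω ^ k • (clockZ N)ᴴ :=
    conjZpow uX ((clockZ N)ᴴ) ω (omegaN_ne_zero N) (XZH hN) k
  -- outer conjugations (by Z^j)
  have cZj_X : ZJ * shiftX N * ZJn = ω ^ j • shiftX N :=
    conjZpow uZ (shiftX N) ω (omegaN_ne_zero N) (ZX hN) j
  have cZj_XH : ZJ * (shiftX N)ᴴ * ZJn = (ω⁻¹) ^ j • (shiftX N)ᴴ :=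
    conjZpow uZ ((shiftX N)ᴴ) ω⁻¹ (inv_ne_zero (omegaN_ne_zero N)) (ZXH hN) j
  have cZj_Z : ZJ * clockZ N * ZJn = clockZ N := by
    simpa only [_root_.one_zpow, one_smul, mul_one, one_mul, ← hZJ, ← hZJn, ← hXK, ← hXKn] using conjZpow uZ (clockZ N) 1 one_ne_zero (by simp; rfl) j
  have cZj_ZH : ZJ * (clockZ N)ᴴ * ZJn = (clockZ N)ᴴ := by
    simpa only [_root_.one_zpow, one_smul, mul_one, one_mul, ← hZJ, ← hZJn, ← hXK, ← hXKn] using conjZpow uZ ((clockZ N)ᴴ) 1 one_ne_zero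
      (by simp only [one_smul]; show clockZ N * (clockZ N)ᴴ = (clockZ N)ᴴ * clockZ N;
          rw [ZZH hN, hZHZ]) j
  -- combine into full conjugations
  have key : ∀ (g : Matrix (Fin N) (Fin N) ℂ) (s t : ℂ),
      XK * g * XKn = s • g → ZJ * g * ZJn = t • g →
      ZJ * XK * g * XKn * ZJn = (s * t) • g := by
    intro g s t hx hz
    have : ZJ * (XK * g * XKn) * ZJn = (s * t) • g := by
      rw [hx, mul_smul_comm, smul_mul_assoc, hz, smul_smul]
    simpa only [mul_assoc] using this
  have fone : ZJ * XK * (1 : Matrix (Fin N) (Fin N) ℂ) * XKn * ZJn = 1 := by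
    simpa only [_root_.one_zpow, one_smul, mul_one, one_mul, ← hZJ, ← hZJn, ← hXK, ← hXKn] using key 1 1 1 (by simpa only [_root_.one_zpow, one_smul, mul_one, one_mul, ← hZJ, ← hZJn, ← hXK, ← hXKn] using conjZpow uX 1 1 one_ne_zero (by simp) k)
      (by simpa only [_root_.one_zpow, one_smul, mul_one, one_mul, ← hZJ, ← hZJn, ← hXK, ← hXKn] using conjZpow uZ 1 1 one_ne_zero (by simp) j)
  have fX : ZJ * XK * shiftX N * XKn * ZJn = ω ^ j • shiftX N := by
    simpa only [_root_.one_zpow, one_smul, mul_one, one_mul, ← hZJ, ← hZJn, ← hXK, ← hXKn] using key (shiftX N) 1 (ω ^ j) (by simpa only [_root_.one_zpow, one_smul, mul_one, one_mul, ← hZJ, ← hZJn, ← hXK, ← hXKn] using cXk_X) cZj_X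
  have fXH : ZJ * XK * (shiftX N)ᴴ * XKn * ZJn = (ω⁻¹) ^ j • (shiftX N)ᴴ := by
    simpa only [_root_.one_zpow, one_smul, mul_one, one_mul, ← hZJ, ← hZJn, ← hXK, ← hXKn] using key ((shiftX N)ᴴ) 1 ((ω⁻¹) ^ j) (by simpa only [_root_.one_zpow, one_smul, mul_one, one_mul, ← hZJ, ← hZJn, ← hXK, ← hXKn] using cXk_XH) cZj_XH
  have fZ : ZJ * XK * clockZ N * XKn * ZJn = (ω⁻¹) ^ k • clockZ N := by
    simpa only [_root_.one_zpow, one_smul, mul_one, one_mul, ← hZJ, ← hZJn, ← hXK, ← hXKn] using key (clockZ N) ((ω⁻¹) ^ k) 1 cXk_Z (by simpa only [_root_.one_zpow, one_smul, mul_one, one_mul, ← hZJ, ← hZJn, ← hXK, ← hXKn] using cZj_Z)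
  have fZH : ZJ * XK * (clockZ N)ᴴ * XKn * ZJn = ω ^ k • (clockZ N)ᴴ := by
    simpa only [_root_.one_zpow, one_smul, mul_one, one_mul, ← hZJ, ← hZJn, ← hXK, ← hXKn] using key ((clockZ N)ᴴ) (ω ^ k) 1 cXk_ZH (by simpa only [_root_.one_zpow, one_smul, mul_one, one_mul, ← hZJ, ← hZJn, ← hXK, ← hXKn] using cZj_ZH)
  -- exponential factorizations
  have key2 : ∀ (r : ℝ) (m : ℤ),
      Complex.exp (Complex.I * ((r + 2 * Real.pi * m / N : ℝ) : ℂ))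
        = Complex.exp (Complex.I * r) * ω ^ m := by
    intro r m
    rw [hω, omegaN, ← Complex.exp_int_mul, ← Complex.exp_add]
    congr 1
    push_cast
    ring
  have key2n : ∀ (r : ℝ) (m : ℤ),
      Complex.exp (-(Complex.I * ((r + 2 * Real.pi * m / N : ℝ) : ℂ)))
        = Complex.exp (-(Complex.I * r)) * (ω⁻¹) ^ m := by
    intro r m
    rw [hω, omegaN, ← Complex.exp_neg, ← Complex.exp_int_mul, ← Complex.exp_add]
    congr 1
    push_cast
    ring
  -- expand and finish
  rw [harperH, harperH, harperH0, harperH0, harperH1, harperH1,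
    key2 b j, key2n b j, key2 φ₀ k, key2n φ₀ k]
  simp only [Matrix.mul_add, Matrix.add_mul, Matrix.mul_sub, Matrix.sub_mul,
    Matrix.mul_smul, Matrix.smul_mul]
  rw [fone, fX, fXH, fZ, fZH]
  match_scalars <;> ring
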